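/- Let Q be a finite quiver with vertices [n], topologically sorted in reverse order (every arc goes from a larger-labeled vertex to a smaller one), let u_0 = n − 1, let a_0 be an arc of Q with source u_0 and target v_0, and let Q′ be the quiver obtained from Q by removing the arc a_0. Let l′ ⊆ BP_{Q′} be a set of bipaths of Q′ such that cl_{Q′}(l′) = BP_{Q′}. Let W̃ = acc(u_0) ∩ acc(v_0) be the set of vertices accessible in Q′ both from u_0 and from v_0, and let W = { w ∈ W̃ | for all w′ ∈ W̃ \ {w}, w ∉ acc(w′) }. For each w ∈ W choose a path p_w from u_0 to w in Q′ and a path q_w from v_0 to w in Q′, and set l = l′ ∪ { (p_w, a_0 ⋅ q_w) | w ∈ W }, where a_0 ⋅ q_w denotes the path a_0 followed by q_w. Then cl_Q(l) = BP_Q. -/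

import Mathlib

/-- A finite quiver: a number `n` of vertices (the vertex set being `{0, …, n-1}`)
together with a finite list of arcs, each arc a pair (source, target). -/
structure Quiv where
  nbVertex : ℕ
  arcs : List (ℕ × ℕ)

/-- Well-formedness: all sources and targets are below the number of vertices. -/
def Quiv.Wellformed (Q : Quiv) : Prop :=
  ∀ a ∈ Q.arcs, a.1 < Q.nbVertex ∧ a.2 < Q.nbVertex

/-- A path from `u` to `v` in `Q` is a list of indices into `Q.arcs` selecting a chain
of consecutive arcs starting at `u` and ending at `v`. -/
inductive Quiv.IsPath (Q : Quiv) : ℕ → List ℕ → ℕ → Prop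
  | nil (u : ℕ) : Quiv.IsPath Q u [] u
  | cons {u v w i : ℕ} {p : List ℕ} :
      Q.arcs[i]? = some (u, v) → Quiv.IsPath Q v p w → Quiv.IsPath Q u (i :: p) w

/-- Acyclicity: there is no nonempty path from a vertex to itself
(equivalently, every path visits pairwise distinct vertices). -/
def Quiv.Acyclic (Q : Quiv) : Prop :=
  ∀ (u : ℕ) (p : List ℕ), p ≠ [] → ¬ Q.IsPath u p u

/-- `Q` is topologically sorted in reverse order: every arc `(s, t)` satisfies `s > t`. -/
def Quiv.TopSortedRev (Q : Quiv) : Prop :=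
  ∀ a ∈ Q.arcs, a.2 < a.1

/-- A set of bipaths (pairs of paths with the same source and target), as a
quadruple relation: source, target, first path, second path. -/
abbrev BipathSet := ℕ → ℕ → List ℕ → List ℕ → Prop

/-- The smallest path relation containing `l`: the closure of `l` under reflexivity,
symmetry, transitivity, and concatenation of paths. -/
inductive PathRelClosure (l : BipathSet) : ℕ → ℕ → List ℕ → List ℕ → Prop
  | base {u v : ℕ} {p q : List ℕ} : l u v p q → PathRelClosure l u v p q
  | refl (u v : ℕ) (p : List ℕ) : PathRelClosure l u v p p
  | symm {u v : ℕ} {p q : List ℕ} :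
      PathRelClosure l u v p q → PathRelClosure l u v q p
  | trans {u v : ℕ} {p q r : List ℕ} :
      PathRelClosure l u v p q → PathRelClosure l u v q r → PathRelClosure l u v p r
  | comp {u v w : ℕ} {p p' q q' : List ℕ} :
      PathRelClosure l u v p p' → PathRelClosure l v w q q' →
      PathRelClosure l u w (p ++ q) (p' ++ q')

/-- A subquiver: a selection of vertex labels and of arc indices. -/
structure Subquiv where
  vertices : List ℕ
  arcs : List ℕ

/-- Well-formedness of a subquiver of `Q`. -/
def Subquiv.Wf (S : Subquiv) (Q : Quiv) : Prop :=
  (∀ i ∈ S.arcs, i < Q.arcs.length) ∧ S.vertices.Nodup ∧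
  (∀ x ∈ S.vertices, x < Q.nbVertex) ∧
  (∀ i ∈ S.arcs, ∀ a, Q.arcs[i]? = some a → a.1 ∈ S.vertices ∧ a.2 ∈ S.vertices)

/-- A path of the quiver induced by the subquiver `S` of `Q`, viewed as a path of `Q`:
a path of `Q` whose endpoints are selected vertices of `S` and whose arcs are all
selected arcs of `S`. -/
def Subquiv.PathIn (S : Subquiv) (Q : Quiv) (u : ℕ) (p : List ℕ) (v : ℕ) : Prop :=
  Q.IsPath u p v ∧ u ∈ S.vertices ∧ v ∈ S.vertices ∧ ∀ i ∈ p, i ∈ S.arcs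

/-- The union over the subquivers in `Qs` of the sets of bipaths of the induced
quivers, viewed as bipaths of `Q`. -/
def subBipaths (Q : Quiv) (Qs : List Subquiv) : BipathSet := fun u v p q =>
  ∃ S ∈ Qs, S.PathIn Q u p v ∧ S.PathIn Q u q v

/-- Arcs adjacent to `u` starting a path from `u` to `v` in `Q`. -/
def ArcsFrom (Q : Quiv) (u v : ℕ) : Set ℕ := {e | ∃ p, Q.IsPath u (e :: p) v}

/-- Arcs adjacent to `v` ending a path from `u` to `v` in `Q`. -/
def ArcsTo (Q : Quiv) (v u : ℕ) : Set ℕ := {e | ∃ p, Q.IsPath u (p ++ [e]) v}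

/-- `E_{u,v} = Arcs_from(u,v) ∪ Arcs_to(v,u)`. -/
def ESet (Q : Quiv) (u v : ℕ) : Set ℕ := ArcsFrom Q u v ∪ ArcsTo Q v u

/-- The edge relation of the multigraph `G_{u,v}` on `E_{u,v}`: `e1` and `e2` are
related when either some path of `Q` from `u` to `v` contains both, or some subquiver
in `Qs` contains two paths from `u` to `v` containing respectively `e1` and `e2`. -/
def GEdge (Q : Quiv) (Qs : List Subquiv) (u v : ℕ) (e1 e2 : ℕ) : Prop :=
  e1 ∈ ESet Q u v ∧ e2 ∈ ESet Q u v ∧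
  ((∃ p, Q.IsPath u p v ∧ e1 ∈ p ∧ e2 ∈ p) ∨
   (∃ S ∈ Qs, ∃ p1 p2, S.PathIn Q u p1 v ∧ S.PathIn Q u p2 v ∧ e1 ∈ p1 ∧ e2 ∈ p2))

/-- Connectedness of the multigraph `G_{u,v}`: any two vertices of `G_{u,v}`
(i.e. elements of `E_{u,v}`) are joined by a path of edges. -/
def GConnected (Q : Quiv) (Qs : List Subquiv) (u v : ℕ) : Prop :=
  ∀ e1 ∈ ESet Q u v, ∀ e2 ∈ ESet Q u v, Relation.ReflTransGen (GEdge Q Qs u v) e1 e2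

/-- Fullness of the relation `R_{u,v}` (w.r.t. the closure of the bipath set `l`):
for all `e1, e2 ∈ E_{u,v}`, every path from `u` to `v` containing `e1` is related
to every path from `u` to `v` containing `e2`. -/
def RFull (Q : Quiv) (l : BipathSet) (u v : ℕ) : Prop :=
  ∀ e1 ∈ ESet Q u v, ∀ e2 ∈ ESet Q u v,
    ∀ p1 p2, Q.IsPath u p1 v → e1 ∈ p1 → Q.IsPath u p2 v → e2 ∈ p2 →
      PathRelClosure l u v p1 p2

/-- Reindexing of arc indices of `Q'` (obtained from `Q` by erasing the arc at index
`i0`) back into arc indices of `Q`. -/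
def liftIdx (i0 j : ℕ) : ℕ := if j < i0 then j else j + 1

/-- Correctness of the `comcut` construction. `Q` is topologically sorted in reverse
order, `u0 = n - 1` is the top vertex, `a0` is the arc of `Q` at index `i0`, with
source `u0` and target `v0`, and `Q'` is `Q` deprived of the arc `a0`. Given
`l' ⊆ BP_{Q'}` with `cl_{Q'}(l') = BP_{Q'}`, given the set `W̃ = acc(u0) ∩ acc(v0)`
of vertices accessible in `Q'` both from `u0` and from `v0`, the set
`W = {w ∈ W̃ | ∀ w' ∈ W̃ \ {w}, w ∉ acc(w')}`, and chosen paths `p_w : u0 → w` and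
`q_w : v0 → w` in `Q'` for each `w ∈ W`, the set
`l = l' ∪ {(p_w, a0 ⋅ q_w) | w ∈ W}` (with paths of `Q'` viewed as paths of `Q`)
satisfies `cl_Q(l) = BP_Q`. -/

lemma isPath_append {Q : Quiv} :
    ∀ {u p v q w}, Q.IsPath u p v → Q.IsPath v q w → Q.IsPath u (p ++ q) w := by
  intro u p v q w h1
  induction h1 with
  | nil => exact fun h => h
  | cons ha _ ih => exact fun h2 => .cons ha (ih h2)

lemma isPath_le {Q : Quiv} (htop : Q.TopSortedRev) :
    ∀ {u p v}, Q.IsPath u p v → v ≤ u := by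
  intro u p v h
  induction h with
  | nil => exact le_rfl
  | cons ha _ ih =>
    have := htop _ (List.mem_of_getElem? ha)
    omega

lemma isPath_lt {Q : Quiv} (htop : Q.TopSortedRev) :
    ∀ {u p v}, Q.IsPath u p v → p ≠ [] → v < u := by
  intro u p v h hne
  cases h with
  | nil => exact absurd rfl hne
  | cons ha hrest =>
    have h1 := htop _ (List.mem_of_getElem? ha)
    have h2 := isPath_le htop hrest
    omega

lemma isPath_lift {Q : Quiv} {i0 : ℕ} :
    ∀ {u p v}, (Quiv.mk Q.nbVertex (Q.arcs.eraseIdx i0)).IsPath u p v →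
      Q.IsPath u (p.map (liftIdx i0)) v := by
  intro u p v h
  induction h with
  | nil => exact .nil _
  | cons ha _ ih =>
    refine .cons ?_ ih
    simp only at ha
    rw [List.getElem?_eraseIdx] at ha
    unfold liftIdx
    split at ha <;> rename_i hlt
    · rw [if_pos hlt]; exact ha
    · rw [if_neg hlt]; exact ha

lemma isPath_unlift {Q : Quiv} {i0 : ℕ} :
    ∀ {u p v}, Q.IsPath u p v → i0 ∉ p →
      ∃ p', (Quiv.mk Q.nbVertex (Q.arcs.eraseIdx i0)).IsPath u p' v ∧
        p = p'.map (liftIdx i0) := by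
  intro u p v h
  induction h with
  | nil => exact fun _ => ⟨[], .nil _, rfl⟩
  | @cons u' v' w' i pp ha _ ih =>
    intro hni
    obtain ⟨p', hp', rfl⟩ := ih (fun h => hni (List.mem_cons_of_mem _ h))
    have hne : i ≠ i0 := fun h => hni (h ▸ List.mem_cons_self)
    by_cases hlt : i < i0
    · refine ⟨i :: p', .cons ?_ hp', ?_⟩
      · show (Q.arcs.eraseIdx i0)[i]? = _
        rw [List.getElem?_eraseIdx, if_pos hlt]; exact ha
      · have h2 : liftIdx i0 i = i := by unfold liftIdx; rw [if_pos hlt]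
        simp [h2]
    · refine ⟨(i - 1) :: p', .cons ?_ hp', ?_⟩
      · show (Q.arcs.eraseIdx i0)[i-1]? = _
        rw [List.getElem?_eraseIdx, if_neg (by omega)]
        have h2 : i - 1 + 1 = i := by omega
        rw [h2]; exact ha
      · have h2 : liftIdx i0 (i - 1) = i := by
          unfold liftIdx; rw [if_neg (by omega)]; omega
        simp [h2]

theorem comcut_correct (Q : Quiv) (hwf : Q.Wellformed) (htop : Q.TopSortedRev)
    (hn : 0 < Q.nbVertex)
    (u0 v0 i0 : ℕ) (hu0 : u0 = Q.nbVertex - 1)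
    (ha0 : Q.arcs[i0]? = some (u0, v0))
    (Q' : Quiv) (hQ' : Q' = ⟨Q.nbVertex, Q.arcs.eraseIdx i0⟩)
    (l' : BipathSet)
    (hl'bp : ∀ u v p q, l' u v p q → Q'.IsPath u p v ∧ Q'.IsPath u q v)
    (hl'full : ∀ u v p q, Q'.IsPath u p v → Q'.IsPath u q v →
      PathRelClosure l' u v p q)
    (Wt : Set ℕ)
    (hWt : Wt = {w | (∃ p, Q'.IsPath u0 p w) ∧ (∃ p, Q'.IsPath v0 p w)})
    (W : Set ℕ)
    (hW : W = {w ∈ Wt | ∀ w' ∈ Wt, w' ≠ w → ¬ ∃ p, Q'.IsPath w' p w})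
    (pw qw : ℕ → List ℕ)
    (hpw : ∀ w ∈ W, Q'.IsPath u0 (pw w) w)
    (hqw : ∀ w ∈ W, Q'.IsPath v0 (qw w) w)
    (l : BipathSet)
    (hl : l = fun u v p q =>
      (∃ p' q', l' u v p' q' ∧ p = p'.map (liftIdx i0) ∧ q = q'.map (liftIdx i0)) ∨
      (∃ w ∈ W, u = u0 ∧ v = w ∧ p = (pw w).map (liftIdx i0) ∧
        q = i0 :: (qw w).map (liftIdx i0))) :
    ∀ u v p q, Q.IsPath u p v → Q.IsPath u q v → PathRelClosure l u v p q := by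

  subst hQ'
  set Q' : Quiv := ⟨Q.nbVertex, Q.arcs.eraseIdx i0⟩ with hQ'
  have hmem0 : (u0, v0) ∈ Q.arcs := List.mem_of_getElem? ha0
  have hv0u0 : v0 < u0 := htop _ hmem0
  have htop' : Q'.TopSortedRev := fun a ha => htop a (List.mem_of_mem_eraseIdx ha)
  have hu0n : u0 < Q.nbVertex := (hwf _ hmem0).1
  -- lifting the closure for l' to the closure for l
  have clift : ∀ u v p q, PathRelClosure l' u v p q →
      PathRelClosure l u v (p.map (liftIdx i0)) (q.map (liftIdx i0)) := by
    intro u v p q h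
    induction h with
    | @base u v p q hb =>
      exact .base (by rw [hl]; exact Or.inl ⟨p, q, hb, rfl, rfl⟩)
    | refl => exact .refl _ _ _
    | symm _ ih => exact .symm ih
    | trans _ _ ih1 ih2 => exact .trans ih1 ih2
    | comp _ _ ih1 ih2 =>
      rw [List.map_append, List.map_append]
      exact .comp ih1 ih2
  -- the start vertex of any Q-path containing the arc i0 is u0
  have start_eq : ∀ u p v, Q.IsPath u p v → i0 ∈ p → u = u0 := by
    intro u p v h
    induction h with
    | nil => exact fun h => absurd h List.not_mem_nil
    | @cons u' v' w' i pp ha _ ih =>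
      intro hmem
      rcases List.mem_cons.1 hmem with rfl | hmem
      · rw [ha0] at ha
        exact (congrArg Prod.fst (Option.some.inj ha)).symm
      · exfalso
        have h1 := ih hmem
        have h2 := htop _ (List.mem_of_getElem? ha)
        have h3 := (hwf _ (List.mem_of_getElem? ha)).1
        omega
  -- any Q-path containing i0 starts with i0 and the rest avoids i0
  have head_i0 : ∀ u p v, Q.IsPath u p v → i0 ∈ p →
      u = u0 ∧ ∃ p1, p = i0 :: p1 ∧ Q.IsPath v0 p1 v ∧ i0 ∉ p1 := by
    intro u p v h hmem
    refine ⟨start_eq _ _ _ h hmem, ?_⟩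
    cases h with
    | nil => exact absurd hmem List.not_mem_nil
    | @cons u' v' w' i pp ha hrest =>
      rcases List.mem_cons.1 hmem with rfl | hmem2
      · rw [ha0] at ha
        have hv' : v' = v0 := (congrArg Prod.snd (Option.some.inj ha)).symm
        subst hv'
        refine ⟨pp, rfl, hrest, fun hc => ?_⟩
        have := start_eq _ _ _ hrest hc
        omega
      · exfalso
        have h1 := start_eq _ _ _ hrest hmem2
        have h2 := htop _ (List.mem_of_getElem? ha)
        have h3 := (hwf _ (List.mem_of_getElem? ha)).1
        omega
  -- reaching a vertex of Wt from a minimal vertex of Wt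
  have wreach : ∀ k v, Q.nbVertex - v ≤ k → v ∈ Wt →
      ∃ w ∈ W, ∃ r, Q'.IsPath w r v := by
    intro k
    induction k with
    | zero =>
      intro v hk hv
      exfalso
      rw [hWt] at hv
      obtain ⟨⟨p, hp⟩, -⟩ := hv
      have := isPath_le htop' hp
      omega
    | succ k ih =>
      intro v hk hv
      by_cases hvW : v ∈ W
      · exact ⟨v, hvW, [], .nil _⟩
      · rw [hW] at hvW
        have hvW' : ¬ (v ∈ Wt ∧ ∀ w' ∈ Wt, w' ≠ v → ¬ ∃ p, Q'.IsPath w' p v) := hvW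
        push_neg at hvW'
        obtain ⟨w', hw', hne, r0, hr0⟩ := hvW' hv
        have hr0ne : r0 ≠ [] := by rintro rfl; cases hr0; exact hne rfl
        have hvw' : v < w' := isPath_lt htop' hr0 hr0ne
        obtain ⟨w, hw, r, hr⟩ := ih w' (by
          have hw'2 := hw'
          rw [hWt] at hw'2
          obtain ⟨⟨p, hp⟩, -⟩ := hw'2
          have := isPath_le htop' hp
          omega) hw'
        exact ⟨w, hw, r ++ r0, isPath_append hr hr0⟩
  -- the mixed case
  have mixed : ∀ v p q1, Q.IsPath u0 p v → i0 ∉ p → Q.IsPath v0 q1 v → i0 ∉ q1 →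
      PathRelClosure l u0 v p (i0 :: q1) := by
    intro v p q1 hp hpn hq1 hq1n
    obtain ⟨p', hp', rfl⟩ := isPath_unlift hp hpn
    obtain ⟨q1', hq1', rfl⟩ := isPath_unlift hq1 hq1n
    have hvWt : v ∈ Wt := by rw [hWt]; exact ⟨⟨p', hp'⟩, ⟨q1', hq1'⟩⟩
    obtain ⟨w, hwW, r, hr⟩ := wreach (Q.nbVertex - v) v le_rfl hvWt
    have c1 : PathRelClosure l u0 v (p'.map (liftIdx i0)) ((pw w ++ r).map (liftIdx i0)) :=
      clift _ _ _ _ (hl'full _ _ _ _ hp' (isPath_append (hpw w hwW) hr))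
    have c2 : PathRelClosure l u0 w ((pw w).map (liftIdx i0))
        (i0 :: (qw w).map (liftIdx i0)) :=
      .base (by rw [hl]; exact Or.inr ⟨w, hwW, rfl, rfl, rfl, rfl⟩)
    have c3 : PathRelClosure l u0 v ((pw w).map (liftIdx i0) ++ r.map (liftIdx i0))
        ((i0 :: (qw w).map (liftIdx i0)) ++ r.map (liftIdx i0)) :=
      .comp c2 (.refl w v (r.map (liftIdx i0)))
    have c4 : PathRelClosure l v0 v ((qw w ++ r).map (liftIdx i0)) (q1'.map (liftIdx i0)) :=
      clift _ _ _ _ (hl'full _ _ _ _ (isPath_append (hqw w hwW) hr) hq1')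
    have c5 : PathRelClosure l u0 v ([i0] ++ (qw w ++ r).map (liftIdx i0))
        ([i0] ++ q1'.map (liftIdx i0)) := .comp (.refl u0 v0 [i0]) c4
    rw [List.map_append] at c1 c5
    exact .trans c1 (.trans c3 c5)
  intro u v p q hp hq
  by_cases hip : i0 ∈ p <;> by_cases hiq : i0 ∈ q
  · obtain ⟨rfl, p1, rfl, hp1, hp1n⟩ := head_i0 _ _ _ hp hip
    obtain ⟨-, q1, rfl, hq1, hq1n⟩ := head_i0 _ _ _ hq hiq
    obtain ⟨p1', hp1', rfl⟩ := isPath_unlift hp1 hp1n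
    obtain ⟨q1', hq1', rfl⟩ := isPath_unlift hq1 hq1n
    have hcl := clift _ _ _ _ (hl'full _ _ _ _ hp1' hq1')
    exact .comp (.refl _ _ [i0]) hcl
  · obtain ⟨rfl, p1, rfl, hp1, hp1n⟩ := head_i0 _ _ _ hp hip
    exact .symm (mixed v q p1 hq hiq hp1 hp1n)
  · obtain ⟨rfl, q1, rfl, hq1, hq1n⟩ := head_i0 _ _ _ hq hiq
    exact mixed v p q1 hp hip hq1 hq1n
  · obtain ⟨p', hp', rfl⟩ := isPath_unlift hp hip
    obtain ⟨q', hq', rfl⟩ := isPath_unlift hq hiq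
    exact clift _ _ _ _ (hl'full _ _ _ _ hp' hq')
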